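/- With f : F_n(X × Q) → F_n(X) × Q defined by f(A) = (π_X(A), η_p(π_Q(A))), every fiber f⁻¹(({x₁,…,x_ℓ}, q)) is contractible: the homotopy G({(y₁,q₁),…,(y_r,q_r)}, t) = {(y₁,(1−t)q₁+tq),…,(y_r,(1−t)q_r+tq)} maps f⁻¹(A) × [0,1] into f⁻¹(A) and contracts f⁻¹(A) to the point {(x₁,q),…,(x_ℓ,q)}. -/

import Mathlib

open Metric TopologicalSpace Set Filter unitInterval

/-- The n-th symmetric product: nonempty subsets with at most n points,
as a subspace of the nonempty compact subsets with the Hausdorff metric. -/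
abbrev SymProd (X : Type*) [MetricSpace X] (n : ℕ) :=
  {A : NonemptyCompacts X // (A : Set X).Finite ∧ (A : Set X).ncard ≤ n}

/-- A Z-set in a metric space. -/
def IsZSet {Y : Type*} [MetricSpace Y] (A : Set Y) : Prop :=
  IsClosed A ∧ ∀ ε > 0, ∃ f : Y → Y, Continuous f ∧ (∀ y, f y ∉ A) ∧ ∀ y, dist y (f y) < ε

/-- A Z-map: a continuous map whose image is a Z-set. -/
def IsZMap {X Y : Type*} [MetricSpace X] [MetricSpace Y] (f : X → Y) : Prop :=
  Continuous f ∧ IsZSet (Set.range f)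


/-- The Hilbert space ℓ₂ of square-summable real sequences. -/
noncomputable abbrev ellTwo := lp (fun _ : ℕ => ℝ) 2



lemma nearest_unique {E : Type*} [NormedAddCommGroup E] [InnerProductSpace ℝ E]
    {C : Set E} (hC : Convex ℝ C) {p a b : E} (ha : a ∈ C) (hb : b ∈ C)
    (ha' : ∀ z ∈ C, dist p a ≤ dist p z) (hb' : ∀ z ∈ C, dist p b ≤ dist p z) : a = b := by
  have hab : dist p a = dist p b := le_antisymm (ha' b hb) (hb' a ha)
  have hm : ((1:ℝ)/2) • a + ((1:ℝ)/2) • b ∈ C := hC ha hb (by norm_num) (by norm_num) (by norm_num)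
  have hmd : dist p a ≤ dist p (((1:ℝ)/2) • a + ((1:ℝ)/2) • b) := ha' _ hm
  have hpar := parallelogram_law_with_norm ℝ (p - a) (p - b)
  have e1 : (p - a) + (p - b) = (2:ℝ) • (p - (((1:ℝ)/2) • a + ((1:ℝ)/2) • b)) := by
    module
  have e2 : (p - a) - (p - b) = b - a := by module
  rw [e1, e2, norm_smul] at hpar
  have h2n : ‖(2:ℝ)‖ = 2 := by norm_num
  rw [h2n] at hpar
  rw [dist_eq_norm, dist_eq_norm] at hab
  rw [dist_eq_norm, dist_eq_norm] at hmd
  have hz : ‖b - a‖ * ‖b - a‖ ≤ 0 := by nlinarith [norm_nonneg (p - a)]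
  have : b - a = 0 := norm_eq_zero.mp (le_antisymm (le_of_not_gt (fun h => by nlinarith)) (norm_nonneg _))
  exact (sub_eq_zero.mp this).symm

lemma hd_image_le_of_lip {α : Type*} [MetricSpace α] {f : α → α}
    (hf : ∀ x y, dist (f x) (f y) ≤ dist x y) {s t : Set α}
    (hs : IsCompact s) (ht : IsCompact t) (hsn : s.Nonempty) (htn : t.Nonempty) :
    hausdorffDist (f '' s) (f '' t) ≤ hausdorffDist s t := by
  have fin : EMetric.hausdorffEdist s t ≠ ⊤ :=
    hausdorffEdist_ne_top_of_nonempty_of_bounded hsn htn hs.isBounded ht.isBounded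
  have fin' : EMetric.hausdorffEdist t s ≠ ⊤ :=
    hausdorffEdist_ne_top_of_nonempty_of_bounded htn hsn ht.isBounded hs.isBounded
  apply hausdorffDist_le_of_mem_dist hausdorffDist_nonneg
  · rintro _ ⟨x, hx, rfl⟩
    obtain ⟨y, hy, hxy⟩ := ht.exists_infDist_eq_dist htn x
    refine ⟨f y, mem_image_of_mem f hy, (hf x y).trans ?_⟩
    rw [← hxy]
    exact infDist_le_hausdorffDist_of_mem hx fin
  · rintro _ ⟨x, hx, rfl⟩
    obtain ⟨y, hy, hxy⟩ := hs.exists_infDist_eq_dist hsn x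
    refine ⟨f y, mem_image_of_mem f hy, (hf x y).trans ?_⟩
    rw [← hxy, hausdorffDist_comm]
    exact infDist_le_hausdorffDist_of_mem hx fin'

lemma hd_maps_le {α : Type*} [MetricSpace α] {f g : α → α} {s : Set α} {r : ℝ}
    (hr : 0 ≤ r) (h : ∀ x ∈ s, dist (f x) (g x) ≤ r) :
    hausdorffDist (f '' s) (g '' s) ≤ r := by
  apply hausdorffDist_le_of_mem_dist hr
  · rintro _ ⟨x, hx, rfl⟩
    exact ⟨g x, mem_image_of_mem g hx, h x hx⟩
  · rintro _ ⟨x, hx, rfl⟩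
    exact ⟨f x, mem_image_of_mem f hx, by rw [dist_comm]; exact h x hx⟩

namespace st16

noncomputable def mMap (Q : Set ellTwo) (hconv : Convex ℝ Q) (q₀ : Q) {X : Type*}
    (t : I) (z : X × Q) : X × Q :=
  (z.1, ⟨(1 - (t : ℝ)) • ((z.2 : Q) : ellTwo) + (t : ℝ) • ((q₀ : Q) : ellTwo),
    hconv z.2.2 q₀.2 (sub_nonneg.2 t.2.2) t.2.1 (by ring)⟩)

@[simp] lemma mMap_fst (Q : Set ellTwo) (hconv : Convex ℝ Q) (q₀ : Q) {X : Type*}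
    (t : I) (z : X × Q) : (mMap Q hconv q₀ t z).1 = z.1 := rfl

@[simp] lemma mMap_snd (Q : Set ellTwo) (hconv : Convex ℝ Q) (q₀ : Q) {X : Type*}
    (t : I) (z : X × Q) : ((mMap Q hconv q₀ t z).2 : ellTwo) =
      (1 - (t : ℝ)) • ((z.2 : Q) : ellTwo) + (t : ℝ) • ((q₀ : Q) : ellTwo) := rfl

lemma mMap_cont (Q : Set ellTwo) (hconv : Convex ℝ Q) (q₀ : Q) {X : Type*}
    [TopologicalSpace X] (t : I) : Continuous (mMap Q hconv q₀ t (X := X)) := by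
  refine continuous_fst.prodMk (Continuous.subtype_mk ?_ _)
  exact ((((continuous_subtype_val (p := (· ∈ Q))).comp (continuous_snd (X := X))).const_smul (1 - (t : ℝ))).add continuous_const)

lemma mMap_lip (Q : Set ellTwo) (hconv : Convex ℝ Q) (q₀ : Q) {X : Type*}
    [MetricSpace X] (t : I) (z w : X × Q) :
    dist (mMap Q hconv q₀ t z) (mMap Q hconv q₀ t w) ≤ dist z w := by
  rw [Prod.dist_eq]
  apply max_le
  · rw [Prod.dist_eq (x := z)]; exact le_max_left _ _
  · have h2 : dist (mMap Q hconv q₀ t z).2 (mMap Q hconv q₀ t w).2 ≤ dist z.2 w.2 := by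
      rw [Subtype.dist_eq, Subtype.dist_eq, dist_eq_norm, dist_eq_norm, mMap_snd, mMap_snd]
      have e : (1 - (t : ℝ)) • ((z.2 : Q) : ellTwo) + (t : ℝ) • ((q₀ : Q) : ellTwo) -
          ((1 - (t : ℝ)) • ((w.2 : Q) : ellTwo) + (t : ℝ) • ((q₀ : Q) : ellTwo)) =
          (1 - (t : ℝ)) • (((z.2 : Q) : ellTwo) - ((w.2 : Q) : ellTwo)) := by module
      rw [e, norm_smul, Real.norm_eq_abs, abs_of_nonneg (sub_nonneg.2 t.2.2)]
      exact mul_le_of_le_one_left (norm_nonneg _) (by linarith [t.2.1])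
    refine h2.trans ?_
    rw [Prod.dist_eq (x := z)]; exact le_max_right _ _

lemma mMap_tdist (Q : Set ellTwo) (hconv : Convex ℝ Q) (hQb : Bornology.IsBounded Q)
    (q₀ : Q) {X : Type*} [MetricSpace X] (t t' : I) (z : X × Q) :
    dist (mMap Q hconv q₀ t z) (mMap Q hconv q₀ t' z) ≤ diam Q * dist t t' := by
  have : dist (mMap Q hconv q₀ t z) (mMap Q hconv q₀ t' z) =
      dist (mMap Q hconv q₀ t z).2 (mMap Q hconv q₀ t' z).2 := by
    rw [Prod.dist_eq]
    simp [mMap, dist_nonneg]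
  rw [this, Subtype.dist_eq, dist_eq_norm, mMap_snd, mMap_snd]
  have e : (1 - (t : ℝ)) • ((z.2 : Q) : ellTwo) + (t : ℝ) • ((q₀ : Q) : ellTwo) -
      ((1 - (t' : ℝ)) • ((z.2 : Q) : ellTwo) + (t' : ℝ) • ((q₀ : Q) : ellTwo)) =
      ((t' : ℝ) - (t : ℝ)) • (((z.2 : Q) : ellTwo) - ((q₀ : Q) : ellTwo)) := by module
  rw [e, norm_smul, Real.norm_eq_abs]
  have h1 : ‖((z.2 : Q) : ellTwo) - ((q₀ : Q) : ellTwo)‖ ≤ diam Q := by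
    rw [← dist_eq_norm]
    exact dist_le_diam_of_mem hQb z.2.2 q₀.2
  have h2 : |(t' : ℝ) - (t : ℝ)| = dist t t' := by
    rw [Subtype.dist_eq, Real.dist_eq, abs_sub_comm]
  rw [h2]
  calc dist t t' * ‖((z.2 : Q) : ellTwo) - ((q₀ : Q) : ellTwo)‖
      ≤ dist t t' * diam Q := mul_le_mul_of_nonneg_left h1 dist_nonneg
    _ = diam Q * dist t t' := mul_comm _ _

noncomputable def GN (Q : Set ellTwo) (hconv : Convex ℝ Q) (q₀ : Q) {X : Type*}
    [MetricSpace X] (t : I) (A : NonemptyCompacts (X × Q)) : NonemptyCompacts (X × Q) :=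
  ⟨⟨mMap Q hconv q₀ t '' A, A.isCompact.image (mMap_cont Q hconv q₀ t)⟩,
    A.nonempty.image _⟩

@[simp] lemma GN_coe (Q : Set ellTwo) (hconv : Convex ℝ Q) (q₀ : Q) {X : Type*}
    [MetricSpace X] (t : I) (A : NonemptyCompacts (X × Q)) :
    (GN Q hconv q₀ t A : Set (X × Q)) = mMap Q hconv q₀ t '' A := rfl

lemma GN_dist (Q : Set ellTwo) (hconv : Convex ℝ Q) (hQb : Bornology.IsBounded Q)
    (q₀ : Q) {X : Type*} [MetricSpace X] (t t' : I) (A A' : NonemptyCompacts (X × Q)) :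
    dist (GN Q hconv q₀ t A) (GN Q hconv q₀ t' A') ≤ dist A A' + diam Q * dist t t' := by
  rw [NonemptyCompacts.dist_eq]
  have fin : EMetric.hausdorffEdist (mMap Q hconv q₀ t '' (A : Set (X × Q)))
      (mMap Q hconv q₀ t '' (A' : Set (X × Q))) ≠ ⊤ :=
    hausdorffEdist_ne_top_of_nonempty_of_bounded (A.nonempty.image _) (A'.nonempty.image _)
      (A.isCompact.image (mMap_cont Q hconv q₀ t)).isBounded
      (A'.isCompact.image (mMap_cont Q hconv q₀ t)).isBounded
  refine (hausdorffDist_triangle (t := mMap Q hconv q₀ t '' (A' : Set (X × Q))) fin).trans ?_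
  gcongr
  · have := hd_image_le_of_lip (mMap_lip Q hconv q₀ t) A.isCompact A'.isCompact
      A.nonempty A'.nonempty
    rwa [← NonemptyCompacts.dist_eq] at this
  · exact hd_maps_le (by positivity) (fun z _ => mMap_tdist Q hconv hQb q₀ t t' z)

lemma GN_cont (Q : Set ellTwo) (hconv : Convex ℝ Q) (hQb : Bornology.IsBounded Q)
    (q₀ : Q) {X : Type*} [MetricSpace X] :
    Continuous (fun pr : NonemptyCompacts (X × Q) × I => GN Q hconv q₀ pr.2 pr.1) := by
  have K0 : (0:ℝ) ≤ 1 + diam Q := by positivity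
  refine (LipschitzWith.of_dist_le_mul (K := ⟨1 + diam Q, K0⟩) ?_).continuous
  rintro ⟨A, t⟩ ⟨A', t'⟩
  dsimp only
  have h := GN_dist Q hconv hQb q₀ t t' A A'
  have hd1 : dist A A' ≤ dist (A, t) (A', t') := by rw [Prod.dist_eq]; exact le_max_left _ _
  have hd2 : dist t t' ≤ dist (A, t) (A', t') := by rw [Prod.dist_eq]; exact le_max_right _ _
  change _ ≤ (1 + diam Q) * _
  nlinarith [dist_nonneg (x := (A,t)) (y := (A',t')), diam_nonneg (s := Q)]

end st16

theorem stmt16 {X : Type*} [MetricSpace X] (n : ℕ) (hn : 0 < n)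
    (Q : Set ellTwo) (hconv : Convex ℝ Q) (hcomp : IsCompact Q)
    (hQ : Nonempty (Q ≃ₜ (ℕ → I))) (p : ellTwo) (hp : p ∈ Q)
    (η : SymProd Q n → Q)
    (hη : ∀ K : SymProd Q n,
      ((η K : Q) : ellTwo) ∈ convexHull ℝ (((↑) : Q → ellTwo) '' (K.1 : Set Q)) ∧
      ∀ z ∈ convexHull ℝ (((↑) : Q → ellTwo) '' (K.1 : Set Q)),
        dist p ((η K : Q) : ellTwo) ≤ dist p z)
    (f : SymProd (X × Q) n → SymProd X n × Q)
    (hf : ∀ A : SymProd (X × Q) n,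
      ((f A).1.1 : Set X) = Prod.fst '' (A.1 : Set (X × Q)) ∧
      ∃ K : SymProd Q n, (K.1 : Set Q) = Prod.snd '' (A.1 : Set (X × Q)) ∧ (f A).2 = η K)
    (S : SymProd X n) (q₀ : Q) :
    (∀ B : SymProd (X × Q) n, f B = (S, q₀) → ∀ t : I, ∀ B' : SymProd (X × Q) n,
      (∀ z : X × Q, z ∈ (B'.1 : Set (X × Q)) ↔ ∃ w ∈ (B.1 : Set (X × Q)),
        z.1 = w.1 ∧ (z.2 : ellTwo) = (1 - (t : ℝ)) • ((w.2 : Q) : ellTwo) + (t : ℝ) • (q₀ : ellTwo)) →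
      f B' = (S, q₀)) ∧
    ∃ G : {B : SymProd (X × Q) n // f B = (S, q₀)} × I →
        {B : SymProd (X × Q) n // f B = (S, q₀)},
      Continuous G ∧
      (∀ B t, ∀ z : X × Q, z ∈ ((G (B, t)).1.1 : Set (X × Q)) ↔
        ∃ w ∈ (B.1.1 : Set (X × Q)), z.1 = w.1 ∧
          (z.2 : ellTwo) = (1 - (t : ℝ)) • ((w.2 : Q) : ellTwo) + (t : ℝ) • (q₀ : ellTwo)) ∧
      (∀ B, G (B, 0) = B) ∧
      ∀ B, ((G (B, 1)).1.1 : Set (X × Q)) = {z : X × Q | z.1 ∈ (S.1 : Set X) ∧ z.2 = q₀} := by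
  classical
  have part1 : ∀ B : SymProd (X × Q) n, f B = (S, q₀) → ∀ t : I, ∀ B' : SymProd (X × Q) n,
      (∀ z : X × Q, z ∈ (B'.1 : Set (X × Q)) ↔ ∃ w ∈ (B.1 : Set (X × Q)),
        z.1 = w.1 ∧ (z.2 : ellTwo) = (1 - (t : ℝ)) • ((w.2 : Q) : ellTwo) + (t : ℝ) • (q₀ : ellTwo)) →
      f B' = (S, q₀) := by
    intro B hB t B' hB'
    obtain ⟨hB1, K, hK, hK2⟩ := hf B
    obtain ⟨hB1', K', hK', hK2'⟩ := hf B'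
    have hfB1 : (f B).1 = S := by rw [hB]
    have hfB2 : (f B).2 = q₀ := by rw [hB]
    have hηK : η K = q₀ := by rw [← hK2, hfB2]
    have hfst : Prod.fst '' (B'.1 : Set (X × Q)) = Prod.fst '' (B.1 : Set (X × Q)) := by
      ext x
      constructor
      · rintro ⟨z, hz, rfl⟩
        obtain ⟨w, hw, h1, -⟩ := (hB' z).1 hz
        exact ⟨w, hw, h1.symm⟩
      · rintro ⟨w, hw, rfl⟩
        have hc : (1 - (t : ℝ)) • ((w.2 : Q) : ellTwo) + (t : ℝ) • ((q₀ : Q) : ellTwo) ∈ Q :=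
          hconv w.2.2 q₀.2 (sub_nonneg.2 t.2.2) t.2.1 (by ring)
        exact ⟨(w.1, ⟨_, hc⟩), (hB' _).2 ⟨w, hw, rfl, rfl⟩, rfl⟩
    have h1 : (f B').1 = S := by
      apply Subtype.ext
      apply NonemptyCompacts.ext
      rw [hB1', hfst, ← hB1, hfB1]
    let ψ : ellTwo →ᵃ[ℝ] ellTwo :=
      { toFun := fun v => (1 - (t : ℝ)) • v + (t : ℝ) • ((q₀ : Q) : ellTwo)
        linear := (1 - (t : ℝ)) • LinearMap.id
        map_vadd' := by
          intro pp v
          show (1 - (t : ℝ)) • (v + pp) + (t : ℝ) • ((q₀ : Q) : ellTwo) =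
            (1 - (t : ℝ)) • v + ((1 - (t : ℝ)) • pp + (t : ℝ) • ((q₀ : Q) : ellTwo))
          module }
    have hψ : ∀ v : ellTwo, ψ v = (1 - (t : ℝ)) • v + (t : ℝ) • ((q₀ : Q) : ellTwo) :=
      fun v => rfl
    have hq₀C₀ : ((q₀ : Q) : ellTwo) ∈ convexHull ℝ (((↑) : Q → ellTwo) '' (K.1 : Set Q)) := by
      have := (hη K).1
      rwa [hηK] at this
    have hmin₀ : ∀ z ∈ convexHull ℝ (((↑) : Q → ellTwo) '' (K.1 : Set Q)),
        dist p ((q₀ : Q) : ellTwo) ≤ dist p z := by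
      intro z hz
      have := (hη K).2 z hz
      rwa [hηK] at this
    have himg : (((↑) : Q → ellTwo) '' (K'.1 : Set Q)) =
        ψ '' (((↑) : Q → ellTwo) '' (K.1 : Set Q)) := by
      ext v
      constructor
      · rintro ⟨c, hc, rfl⟩
        rw [hK'] at hc
        obtain ⟨z, hz, rfl⟩ := hc
        obtain ⟨w, hw, -, h2⟩ := (hB' z).1 hz
        refine ⟨((w.2 : Q) : ellTwo), ⟨w.2, ?_, rfl⟩, ?_⟩
        · rw [hK]; exact ⟨w, hw, rfl⟩
        · rw [hψ]; exact h2.symm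
      · rintro ⟨-, ⟨c, hc, rfl⟩, rfl⟩
        rw [hK] at hc
        obtain ⟨w, hw, rfl⟩ := hc
        have hc2 : (1 - (t : ℝ)) • ((w.2 : Q) : ellTwo) + (t : ℝ) • ((q₀ : Q) : ellTwo) ∈ Q :=
          hconv w.2.2 q₀.2 (sub_nonneg.2 t.2.2) t.2.1 (by ring)
        refine ⟨⟨_, hc2⟩, ?_, (hψ _).symm⟩
        rw [hK']
        exact ⟨(w.1, ⟨_, hc2⟩), (hB' _).2 ⟨w, hw, rfl, rfl⟩, rfl⟩
    have hq₀C : ((q₀ : Q) : ellTwo) ∈ convexHull ℝ (((↑) : Q → ellTwo) '' (K'.1 : Set Q)) := by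
      rw [himg, ← AffineMap.image_convexHull]
      refine ⟨_, hq₀C₀, ?_⟩
      rw [hψ]; module
    have hsub : convexHull ℝ (((↑) : Q → ellTwo) '' (K'.1 : Set Q)) ⊆
        convexHull ℝ (((↑) : Q → ellTwo) '' (K.1 : Set Q)) := by
      refine convexHull_min ?_ (convex_convexHull ℝ _)
      rw [himg]
      rintro - ⟨v, hv, rfl⟩
      rw [hψ]
      exact (convex_convexHull ℝ _) (subset_convexHull ℝ _ hv) hq₀C₀
        (sub_nonneg.2 t.2.2) t.2.1 (by ring)
    have huniq : ((η K' : Q) : ellTwo) = ((q₀ : Q) : ellTwo) :=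
      nearest_unique (convex_convexHull ℝ _) (hη K').1 hq₀C (hη K').2
        (fun z hz => hmin₀ z (hsub hz))
    have h2 : (f B').2 = q₀ := by
      rw [hK2']; exact Subtype.ext huniq
    rw [Prod.ext_iff]; exact ⟨h1, h2⟩
  refine ⟨part1, ?_⟩
  have hQb := hcomp.isBounded
  have hmem : ∀ (Bb : SymProd (X × Q) n) (t : I) (z : X × Q),
      z ∈ st16.mMap Q hconv q₀ t '' (Bb.1 : Set (X × Q)) ↔
      ∃ w ∈ (Bb.1 : Set (X × Q)), z.1 = w.1 ∧
        (z.2 : ellTwo) = (1 - (t : ℝ)) • ((w.2 : Q) : ellTwo) + (t : ℝ) • (q₀ : ellTwo) := by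
    intro Bb t z
    constructor
    · rintro ⟨w, hw, rfl⟩
      exact ⟨w, hw, rfl, rfl⟩
    · rintro ⟨w, hw, h1, h2⟩
      refine ⟨w, hw, ?_⟩
      have hz1 : (st16.mMap Q hconv q₀ t w).1 = z.1 := h1.symm
      have hz2 : (st16.mMap Q hconv q₀ t w).2 = z.2 := Subtype.ext h2.symm
      exact Prod.ext hz1 hz2
  let Gmk : {B : SymProd (X × Q) n // f B = (S, q₀)} × I → SymProd (X × Q) n :=
    fun pr => ⟨st16.GN Q hconv q₀ pr.2 pr.1.1.1,
      pr.1.1.2.1.image _,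
      le_trans (Set.ncard_image_le pr.1.1.2.1) pr.1.1.2.2⟩
  have hGfib : ∀ pr, f (Gmk pr) = (S, q₀) := by
    intro pr
    exact part1 pr.1.1 pr.1.2 pr.2 _ (fun z => hmem pr.1.1 pr.2 z)
  refine ⟨fun pr => ⟨Gmk pr, hGfib pr⟩, ?_, ?_, ?_, ?_⟩
  · have hco : Continuous (fun pr : {B : SymProd (X × Q) n // f B = (S, q₀)} × I =>
        ((pr.1.1.1 : NonemptyCompacts (X × Q)), pr.2)) :=
      Continuous.prodMk
        ((continuous_subtype_val.comp continuous_subtype_val).comp continuous_fst)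
        continuous_snd
    apply Continuous.subtype_mk
    apply Continuous.subtype_mk
    exact (st16.GN_cont Q hconv hQb q₀).comp hco
  · intro B t z
    exact hmem B.1 t z
  · intro B
    apply Subtype.ext
    apply Subtype.ext
    apply NonemptyCompacts.ext
    show st16.mMap Q hconv q₀ 0 '' (B.1.1 : Set (X × Q)) = (B.1.1 : Set (X × Q))
    have hid : ∀ z : X × Q, st16.mMap Q hconv q₀ 0 z = z := by
      intro z
      refine Prod.ext rfl (Subtype.ext ?_)
      show (1 - ((0 : I) : ℝ)) • ((z.2 : Q) : ellTwo) + ((0 : I) : ℝ) • ((q₀ : Q) : ellTwo)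
        = ((z.2 : Q) : ellTwo)
      norm_num
    rw [show st16.mMap Q hconv q₀ 0 = (id : X × Q → X × Q) from funext hid, Set.image_id]
  · intro B
    show st16.mMap Q hconv q₀ 1 '' (B.1.1 : Set (X × Q)) =
      {z : X × Q | z.1 ∈ (S.1 : Set X) ∧ z.2 = q₀}
    obtain ⟨hB1, K, hK, hK2⟩ := hf B.1
    have hfB1 : (f B.1).1 = S := by rw [B.2]
    have hS : (S.1 : Set X) = Prod.fst '' (B.1.1 : Set (X × Q)) :=
      (congrArg (fun s : SymProd X n => (s.1 : Set X)) hfB1).symm.trans hB1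
    have hone : ∀ w : X × Q, (st16.mMap Q hconv q₀ 1 w).2 = q₀ := by
      intro w
      refine Subtype.ext ?_
      show (1 - ((1 : I) : ℝ)) • ((w.2 : Q) : ellTwo) + ((1 : I) : ℝ) • ((q₀ : Q) : ellTwo)
        = ((q₀ : Q) : ellTwo)
      norm_num
    ext z
    simp only [Set.mem_setOf_eq, hS]
    constructor
    · rintro ⟨w, hw, rfl⟩
      exact ⟨⟨w, hw, rfl⟩, hone w⟩
    · rintro ⟨⟨w, hw, h1⟩, h2⟩
      exact ⟨w, hw, Prod.ext h1 (by rw [hone w, h2])⟩
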